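/- arXiv:2511.21870 — 4 statements merged into one kernel-verified Lean document; each statement's English description precedes it below -/
import Mathlib

section
/- Let a, b, c, d, e be positive real numbers with a + b + c + d + e = 1. Define α₁ = min(a+b, c+d+e) − min(a+b, e), α₂ = min(c+d, a+b+e) − min(c+d, e), β₁ = min(a, b+c+d+e) − min(a, b+d+e), β₂ = min(c, a+b+d+e) − min(c, b+d+e), γ₁ = min(b, a+c+d+e) − min(b, a+c+e), γ₂ = min(d, a+b+c+e) − min(d, a+c+e). Then max(α₁, α₂) ≥ max(β₁, β₂) + max(γ₁, γ₂). -/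
theorem stmt_0 (a b c d e : ℝ)
    (ha : 0 < a) (hb : 0 < b) (hc : 0 < c) (hd : 0 < d) (he : 0 < e)
    (hsum : a + b + c + d + e = 1) :
    max (min (a + b) (c + d + e) - min (a + b) e)
        (min (c + d) (a + b + e) - min (c + d) e)
      ≥ max (min a (b + c + d + e) - min a (b + d + e))
            (min c (a + b + d + e) - min c (b + d + e))
        + max (min b (a + c + d + e) - min b (a + c + e))
              (min d (a + b + c + e) - min d (a + c + e)) := by
  set α₁ := min (a + b) (c + d + e) - min (a + b) e with hα₁
  set α₂ := min (c + d) (a + b + e) - min (c + d) e with hα₂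
  set β₁ := min a (b + c + d + e) - min a (b + d + e) with hβ₁
  set β₂ := min c (a + b + d + e) - min c (b + d + e) with hβ₂
  set γ₁ := min b (a + c + d + e) - min b (a + c + e) with hγ₁
  set γ₂ := min d (a + b + c + e) - min d (a + c + e) with hγ₂
  have hb1a1 : β₁ ≤ α₁ := by
    simp only [hβ₁, hα₁, min_def]; split_ifs <;> linarith
  have hb2a2 : β₂ ≤ α₂ := by
    simp only [hβ₂, hα₂, min_def]; split_ifs <;> linarith
  have hg1a1 : γ₁ ≤ α₁ := by
    simp only [hγ₁, hα₁, min_def]; split_ifs <;> linarith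
  have hg2a2 : γ₂ ≤ α₂ := by
    simp only [hγ₂, hα₂, min_def]; split_ifs <;> linarith
  have hβmax : max β₁ β₂ ≤ max α₁ α₂ :=
    max_le (hb1a1.trans (le_max_left _ _)) (hb2a2.trans (le_max_right _ _))
  have hγmax : max γ₁ γ₂ ≤ max α₁ α₂ :=
    max_le (hg1a1.trans (le_max_left _ _)) (hg2a2.trans (le_max_right _ _))
  by_cases hγ : b ≤ a + c + e ∧ d ≤ a + c + e
  · have hg1 : γ₁ ≤ 0 := by
      simp only [hγ₁, min_def]; split_ifs <;> linarith [hγ.1, hγ.2]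
    have hg2 : γ₂ ≤ 0 := by
      simp only [hγ₂, min_def]; split_ifs <;> linarith [hγ.1, hγ.2]
    have : max γ₁ γ₂ ≤ 0 := max_le hg1 hg2
    linarith [hβmax]
  · have hβcond : a ≤ b + d + e ∧ c ≤ b + d + e := by
      rcases not_and_or.mp hγ with h | h <;> push_neg at h <;> constructor <;> linarith
    have hg1 : β₁ ≤ 0 := by
      simp only [hβ₁, min_def]; split_ifs <;> linarith [hβcond.1, hβcond.2]
    have hg2 : β₂ ≤ 0 := by
      simp only [hβ₂, min_def]; split_ifs <;> linarith [hβcond.1, hβcond.2]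
    have : max β₁ β₂ ≤ 0 := max_le hg1 hg2
    linarith [hγmax]
end

section
/- Let a, b, c, d, e be positive real numbers with a + b + c + d + e = 1. Assume: (A1) min(a+b, c+d+e) − min(a+b, e) ≥ min(c+d, a+b+e) − min(c+d, e); (A2) min(a, b+c+d+e) − min(a, b+d+e) ≥ min(c, a+b+d+e) − min(c, b+d+e); (A3) min(d, a+b+c+e) − min(d, a+c+e) ≥ min(b, a+c+d+e) − min(b, a+c+e). Then min(a+b, c+d+e) + min(a, b+d+e) + min(d, a+c+e) ≥ min(a, b+c+d+e) + min(d, a+b+c+e) + min(a+b, e). -/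
set_option maxHeartbeats 1000000

theorem stmt_1 (a b c d e : ℝ)
    (ha : 0 < a) (hb : 0 < b) (hc : 0 < c) (hd : 0 < d) (he : 0 < e)
    (hsum : a + b + c + d + e = 1)
    (hA1 : min (a + b) (c + d + e) - min (a + b) e
            ≥ min (c + d) (a + b + e) - min (c + d) e)
    (hA2 : min a (b + c + d + e) - min a (b + d + e)
            ≥ min c (a + b + d + e) - min c (b + d + e))
    (hA3 : min d (a + b + c + e) - min d (a + c + e)
            ≥ min b (a + c + d + e) - min b (a + c + e)) :
    min (a + b) (c + d + e) + min a (b + d + e) + min d (a + c + e)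
      ≥ min a (b + c + d + e) + min d (a + b + c + e) + min (a + b) e := by
  by_cases hβ : a ≤ b + d + e
  · -- β₁ = 0; need α₁ ≥ γ₂ via α₂
    rw [min_eq_left hβ, min_eq_left (by linarith : a ≤ b + c + d + e)]
    rcases min_cases (a + b) (c + d + e) with ⟨h1, h1'⟩ | ⟨h1, h1'⟩ <;>
    rcases min_cases d (a + c + e) with ⟨h2, h2'⟩ | ⟨h2, h2'⟩ <;>
    rcases min_cases d (a + b + c + e) with ⟨h3, h3'⟩ | ⟨h3, h3'⟩ <;>
    rcases min_cases (a + b) e with ⟨h4, h4'⟩ | ⟨h4, h4'⟩ <;>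
    rcases min_cases (c + d) (a + b + e) with ⟨h5, h5'⟩ | ⟨h5, h5'⟩ <;>
    rcases min_cases (c + d) e with ⟨h6, h6'⟩ | ⟨h6, h6'⟩ <;>
    linarith
  · push_neg at hβ
    have hg : d ≤ a + c + e := by linarith
    rw [min_eq_left hg, min_eq_left (by linarith : d ≤ a + b + c + e),
        min_eq_right (by linarith : b + d + e ≤ a)]
    rcases min_cases (a + b) (c + d + e) with ⟨h1, h1'⟩ | ⟨h1, h1'⟩ <;>
    rcases min_cases a (b + c + d + e) with ⟨h2, h2'⟩ | ⟨h2, h2'⟩ <;>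
    rcases min_cases (a + b) e with ⟨h4, h4'⟩ | ⟨h4, h4'⟩ <;>
    linarith
end

section
/- For every real p with 0 ≤ p ≤ 1, let s = √(p(1−p)), λ₊ = 1/4 + s/2, and λ₋ = 1/4 − s/2. Then 2·(−λ₊·log λ₊ − λ₋·log λ₋) ≥ 2·(−(1/2 + s)·log(1/2 + s) − (1/2 − s)·log(1/2 − s)), where log denotes the natural logarithm and the convention 0·log 0 = 0 is used (as with Mathlib's Real.log, for which log 0 = 0). -/
theorem stmt_9 (p : ℝ) (hp0 : 0 ≤ p) (hp1 : p ≤ 1) :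
    2 * (-((1/4 + Real.sqrt (p * (1 - p)) / 2) * Real.log (1/4 + Real.sqrt (p * (1 - p)) / 2))
         - (1/4 - Real.sqrt (p * (1 - p)) / 2) * Real.log (1/4 - Real.sqrt (p * (1 - p)) / 2))
      ≥ 2 * (-((1/2 + Real.sqrt (p * (1 - p))) * Real.log (1/2 + Real.sqrt (p * (1 - p))))
             - (1/2 - Real.sqrt (p * (1 - p))) * Real.log (1/2 - Real.sqrt (p * (1 - p)))) := by
  set s := Real.sqrt (p * (1 - p)) with hs
  have hs0 : 0 ≤ s := Real.sqrt_nonneg _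
  have hsle : s ≤ 1/2 := by
    rw [hs, show (1/2:ℝ) = Real.sqrt ((1/2)^2) by
      rw [Real.sqrt_sq]; norm_num]
    exact Real.sqrt_le_sqrt (by nlinarith [sq_nonneg (p - 1/2)])
  rcases eq_or_lt_of_le hsle with h | h
  · have h1 : (1/4 : ℝ) + s/2 = 1/2 := by rw [h]; norm_num
    have h2 : (1/4 : ℝ) - s/2 = 0 := by rw [h]; norm_num
    have h3 : (1/2 : ℝ) + s = 1 := by rw [h]; norm_num
    have h4 : (1/2 : ℝ) - s = 0 := by rw [h]; norm_num
    rw [h1, h2, h3, h4, Real.log_one, Real.log_zero]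
    have : Real.log (1/2) ≤ 0 := Real.log_nonpos (by norm_num) (by norm_num)
    nlinarith
  · set a := (1/4 : ℝ) + s/2 with ha
    set b := (1/4 : ℝ) - s/2 with hb
    have hapos : 0 < a := by rw [ha]; linarith
    have hbpos : 0 < b := by rw [hb]; linarith
    have l1 : Real.log (1/2 + s) = Real.log 2 + Real.log a := by
      rw [show (1/2 + s : ℝ) = 2 * a by rw [ha]; ring,
        Real.log_mul two_ne_zero (ne_of_gt hapos)]
    have l2 : Real.log (1/2 - s) = Real.log 2 + Real.log b := by
      rw [show (1/2 - s : ℝ) = 2 * b by rw [hb]; ring,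
        Real.log_mul two_ne_zero (ne_of_gt hbpos)]
    -- convexity: f((a+b)/2) ≤ (f a + f b)/2
    have hconv := Real.convexOn_mul_log.2 (Set.mem_Ici.mpr hapos.le)
      (Set.mem_Ici.mpr hbpos.le) (by norm_num : (0:ℝ) ≤ 1/2)
      (by norm_num : (0:ℝ) ≤ 1/2) (by norm_num)
    simp only [smul_eq_mul] at hconv
    have hab : (1/2 : ℝ) * a + 1/2 * b = 1/4 := by rw [ha, hb]; ring
    rw [hab] at hconv
    have hlog4 : Real.log (1/4) = -(2 * Real.log 2) := by
      rw [show (1/4 : ℝ) = 2⁻¹ ^ 2 by norm_num, Real.log_pow, Real.log_inv]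
      push_cast; ring
    rw [hlog4] at hconv
    rw [l1, l2, show (1/2 + s : ℝ) = 2 * a by rw [ha]; ring,
      show (1/2 - s : ℝ) = 2 * b by rw [hb]; ring]
    have key : 2*a*Real.log 2 + 2*b*Real.log 2 = Real.log 2 := by rw [ha, hb]; ring
    have e1 : 2*a*(Real.log 2 + Real.log a) = 2*a*Real.log 2 + 2*(a*Real.log a) := by ring
    have e2 : 2*b*(Real.log 2 + Real.log b) = 2*b*Real.log 2 + 2*(b*Real.log b) := by ring
    rw [e1, e2]
    clear_value a b
    clear ha hb l1 l2 hlog4 hab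
    nlinarith [hconv, key]
end

section
/- Let λ₁ = (17 + 3√21)/32 and λ₂ = (5 − √21)/32. Then (1/4)·((9/4)·log(3/4) + (7/4)·log(7/4)) < (1/2)·(−λ₁·log λ₁ − 3·λ₂·log λ₂), where log denotes the natural logarithm. -/
theorem stmt_11 :
    (1/4 : ℝ) * ((9/4) * Real.log (3/4) + (7/4) * Real.log (7/4))
      < (1/2) * (-(((17 + 3 * Real.sqrt 21) / 32) * Real.log ((17 + 3 * Real.sqrt 21) / 32))
                 - 3 * (((5 - Real.sqrt 21) / 32) * Real.log ((5 - Real.sqrt 21) / 32))) := by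
  set s := Real.sqrt 21 with hsdef
  have hs0 : 0 ≤ s := Real.sqrt_nonneg 21
  have hs2 : s ^ 2 = 21 := Real.sq_sqrt (by norm_num)
  have hsl : (4.5825 : ℝ) < s := by nlinarith
  have hsu : s < 4.5826 := by nlinarith
  have l2a := Real.log_two_gt_d9
  have l2b := Real.log_two_lt_d9
  -- upper bound on log 3
  have h3 : 12 * Real.log 3 ≤ 19 * Real.log 2 + 7153 / 524288 := by
    have h := Real.log_le_sub_one_of_pos (show (0:ℝ) < 531441 / 524288 by norm_num)
    have e : Real.log (531441 / 524288) = 12 * Real.log 3 - 19 * Real.log 2 := by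
      rw [show (531441:ℝ)/524288 = 3^12/2^19 by norm_num,
        Real.log_div (by positivity) (by positivity), Real.log_pow, Real.log_pow]
      push_cast; ring
    rw [e] at h
    norm_num at h
    linarith
  -- upper bound on log 7
  have h7 : 2 * Real.log 7 ≤ 4 * Real.log 2 + Real.log 3 + 1 / 48 := by
    have h := Real.log_le_sub_one_of_pos (show (0:ℝ) < 49 / 48 by norm_num)
    have e : Real.log (49 / 48) = 2 * Real.log 7 - (4 * Real.log 2 + Real.log 3) := by
      rw [show (49:ℝ)/48 = 7^2/(2^4*3) by norm_num,
        Real.log_div (by positivity) (by positivity),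
        Real.log_mul (by positivity) (by norm_num), Real.log_pow, Real.log_pow]
      push_cast; ring
    rw [e] at h
    norm_num at h
    linarith
  have hA : Real.log (3/4) ≤ -0.2876 := by
    rw [show (3:ℝ)/4 = 3/2^2 by norm_num,
      Real.log_div (by norm_num) (by positivity), Real.log_pow]
    push_cast
    linarith
  have hB : Real.log (7/4) ≤ 0.5598 := by
    rw [show (7:ℝ)/4 = 7/2^2 by norm_num,
      Real.log_div (by norm_num) (by positivity), Real.log_pow]
    push_cast
    linarith
  -- first reflected-entropy term
  have hL1pos : (0:ℝ) < (17 + 3 * s) / 32 := by linarith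
  have hl1 : Real.log ((17 + 3 * s) / 32) ≤ (17 + 3 * s) / 32 - 1 :=
    Real.log_le_sub_one_of_pos hL1pos
  have hT1 : (0.0376 : ℝ) ≤ -(((17 + 3 * s) / 32) * Real.log ((17 + 3 * s) / 32)) := by
    nlinarith [mul_le_mul_of_nonneg_left hl1 (le_of_lt hL1pos), hs2, hsu, hsl]
  -- second reflected-entropy term
  have h40 : (0:ℝ) < 40 + 8 * s := by linarith
  have hinv : (5 - s) / 32 = (40 + 8 * s)⁻¹ :=
    eq_inv_of_mul_eq_one_left (by linear_combination (-(1:ℝ)/4) * hs2)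
  have hlogeq : Real.log ((5 - s) / 32) = -Real.log (40 + 8 * s) := by
    rw [hinv, Real.log_inv]
  have hlow : 6 * Real.log 2 + (2 * s - 9) ≤ Real.log (40 + 8 * s) := by
    have h := Real.log_le_sub_one_of_pos (show (0:ℝ) < 64 / (40 + 8 * s) by positivity)
    have e1 : Real.log (64 / (40 + 8 * s)) = 6 * Real.log 2 - Real.log (40 + 8 * s) := by
      rw [Real.log_div (by norm_num) (ne_of_gt h40),
        show (64:ℝ) = 2^6 by norm_num, Real.log_pow]
      push_cast; ring
    have e2 : (64:ℝ) / (40 + 8 * s) = 10 - 2 * s := by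
      field_simp
      linear_combination (16:ℝ) * hs2
    rw [e1, e2] at h
    linarith
  have hf : (4.3238 : ℝ) ≤ Real.log (40 + 8 * s) := by linarith
  have hc : (0.013043 : ℝ) ≤ (5 - s) / 32 := by linarith
  have hT2 : (0.169 : ℝ) ≤ -(3 * (((5 - s) / 32) * Real.log ((5 - s) / 32))) := by
    rw [hlogeq]
    nlinarith [mul_le_mul hc hf (by norm_num) (by linarith : (0:ℝ) ≤ (5 - s) / 32)]
  linarith [hA, hB, hT1, hT2]
end
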